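/- Let D be a strongly connected digraph of girth 4 containing the 4-cycles (u,v,w,z,u) and (u,v,w,x,u), with x ≠ z. If there exists a vertex a ∉ {u,v,w,x,z} such that z→a ∈ A(D) or a→z ∈ A(D), and d⁺(x) = 1 (so the only out-neighbor of x is u), then D is λ'-connected and λ'(D) ≤ d⁺(u)+d⁺(v)+d⁺(w)+d⁺(z) − 4. -/

import Mathlib

/-- A digraph on vertex type `V`, given by its adjacency (arc) relation. -/
structure Digr (V : Type) where
  Adj : V → V → Prop

namespace Digr

variable {V : Type}

/-- Reachability by directed paths. -/
def Reach (D : Digr V) : V → V → Prop := Relation.ReflTransGen D.Adj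

/-- A digraph is strongly connected if every vertex reaches every other. -/
def StronglyConnected (D : Digr V) : Prop := ∀ u v : V, D.Reach u v

/-- An oriented graph: no loops and no pair of opposite arcs. -/
def Oriented (D : Digr V) : Prop := ∀ u v : V, D.Adj u v → ¬ D.Adj v u

/-- The digraph contains at least one arc. -/
def HasArc (D : Digr V) : Prop := ∃ u v : V, D.Adj u v

/-- Delete a set of arcs. -/
def delArcs (D : Digr V) (S : Set (V × V)) : Digr V :=
  ⟨fun a b => D.Adj a b ∧ (a, b) ∉ S⟩

/-- Delete a set of vertices (keep arcs avoiding them). -/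
def delVerts (D : Digr V) (X : Set V) : Digr V :=
  ⟨fun a b => D.Adj a b ∧ a ∉ X ∧ b ∉ X⟩

/-- Induced subdigraph on a vertex set. -/
def induce (D : Digr V) (X : Set V) : Digr V :=
  ⟨fun a b => a ∈ X ∧ b ∈ X ∧ D.Adj a b⟩

/-- The induced subdigraph on `X` is strongly connected. -/
def StronglyConnectedOn (D : Digr V) (X : Set V) : Prop :=
  ∀ u ∈ X, ∀ v ∈ X, (D.induce X).Reach u v

/-- Mutual reachability. -/
def MReach (D : Digr V) (u v : V) : Prop := D.Reach u v ∧ D.Reach v u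

/-- `X` is a strong component: an equivalence class of mutual reachability. -/
def IsStrongComponent (D : Digr V) (X : Set V) : Prop :=
  ∃ x : V, X = {y | D.MReach x y}

/-- `S` is a restricted arc-cut: a set of arcs whose deletion leaves a
non-trivial strong component `X` (containing an arc) such that deleting the
vertices of `X` from `D` leaves an arc. -/
def IsRestrictedArcCut (D : Digr V) (S : Set (V × V)) : Prop :=
  (∀ p ∈ S, D.Adj p.1 p.2) ∧
  ∃ X : Set V, (D.delArcs S).IsStrongComponent X ∧
    (∃ u ∈ X, ∃ v ∈ X, (D.delArcs S).Adj u v) ∧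
    (D.delVerts X).HasArc

/-- A digraph is λ'-connected if it admits a restricted arc-cut. -/
def LambdaPrimeConnected (D : Digr V) : Prop :=
  ∃ S : Set (V × V), D.IsRestrictedArcCut S

/-- λ'(D): minimum size of a restricted arc-cut. -/
noncomputable def lambdaPrime (D : Digr V) [Fintype V] : ℕ :=
  sInf {n : ℕ | ∃ S : Finset (V × V), D.IsRestrictedArcCut ↑S ∧ S.card = n}

/-- λ(D): the arc-connectivity, the minimum size of an arc set whose removal
destroys strong connectivity. -/
noncomputable def lambda (D : Digr V) [Fintype V] : ℕ :=
  sInf {n : ℕ | ∃ S : Finset (V × V), (∀ p ∈ S, D.Adj p.1 p.2) ∧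
    ¬ (D.delArcs ↑S).StronglyConnected ∧ S.card = n}

/-- The list `l` of distinct vertices forms a directed cycle. -/
def IsCycleList (D : Digr V) (l : List V) : Prop :=
  ∃ h : l ≠ [], l.Nodup ∧ l.Chain' D.Adj ∧ D.Adj (l.getLast h) (l.head h)

/-- The girth: minimum length of a directed cycle. -/
noncomputable def girth (D : Digr V) : ℕ :=
  sInf {n : ℕ | ∃ l : List V, D.IsCycleList l ∧ l.length = n}

/-- `(u,v,w,z,u)` is a 4-cycle of `D`. -/
def Cycle4 (D : Digr V) (u v w z : V) : Prop := D.IsCycleList [u, v, w, z]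

/-- Out-degree. -/
def outDeg (D : Digr V) [Fintype V] [DecidableRel D.Adj] (v : V) : ℕ :=
  (Finset.univ.filter fun w => D.Adj v w).card

/-- In-degree. -/
def inDeg (D : Digr V) [Fintype V] [DecidableRel D.Adj] (v : V) : ℕ :=
  (Finset.univ.filter fun w => D.Adj w v).card

/-- ξ(D): minimum over girth cycles `C` of
`min (Σ d⁺ − g, Σ d⁻ − g)`. -/
noncomputable def xi (D : Digr V) [Fintype V] [DecidableRel D.Adj] : ℤ :=
  sInf {k : ℤ | ∃ l : List V, D.IsCycleList l ∧ l.length = D.girth ∧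
    k = min (((l.map D.outDeg).sum : ℤ) - (D.girth : ℤ))
            (((l.map D.inDeg).sum : ℤ) - (D.girth : ℤ))}

/-- ∂⁺(X): the set of arcs from `X` to its complement. -/
noncomputable def outBoundary (D : Digr V) [Fintype V] (X : Set V) : Finset (V × V) :=
  (Set.toFinite {p : V × V | p.1 ∈ X ∧ p.2 ∉ X ∧ D.Adj p.1 p.2}).toFinset

/-- ∂⁻(X): the set of arcs from the complement of `X` into `X`. -/
noncomputable def inBoundary (D : Digr V) [Fintype V] (X : Set V) : Finset (V × V) :=
  (Set.toFinite {p : V × V | p.1 ∉ X ∧ p.2 ∈ X ∧ D.Adj p.1 p.2}).toFinset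

/-- The list of arcs of a cycle given as a vertex list. -/
def cycleArcs (l : List V) : List (V × V) := l.zip (l.rotate 1)

end Digr
/-- With two 4-cycles `(u,v,w,z,u)`, `(u,v,w,x,u)`, a vertex `a`
outside adjacent to `z`, and `d⁺(x) = 1`, `D` is λ'-connected and
`λ'(D) ≤ d⁺u+d⁺v+d⁺w+d⁺z−4`. -/
theorem stmt9 {V : Type} [Fintype V] (D : Digr V) [DecidableRel D.Adj]
    (hO : D.Oriented) (hS : D.StronglyConnected) (hg : D.girth = 4)
    (u v w z x a : V) (hC : D.Cycle4 u v w z) (hC' : D.Cycle4 u v w x)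
    (hxz : x ≠ z) (ha : a ∉ ({u, v, w, x, z} : Set V))
    (haz : D.Adj z a ∨ D.Adj a z) (hx : D.outDeg x = 1) :
    D.LambdaPrimeConnected ∧
      (D.lambdaPrime : ℤ) ≤
        (D.outDeg u + D.outDeg v + D.outDeg w + D.outDeg z : ℤ) - 4 := by
  classical
  -- extract cycle facts
  obtain ⟨_, hnd, hch, hlast⟩ := hC
  obtain ⟨_, hnd', hch', hlast'⟩ := hC'
  simp [List.Chain', List.isChain_cons_cons] at hch hch'
  obtain ⟨huv, hvw, hwz⟩ := hch
  obtain ⟨-, -, hwx⟩ := hch'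
  have hzu : D.Adj z u := by simpa using hlast
  have hxu : D.Adj x u := by simpa using hlast'
  simp [List.nodup_cons] at hnd hnd'
  obtain ⟨⟨huv', huw', huz'⟩, ⟨hvw', hvz'⟩, hwz'⟩ := hnd
  obtain ⟨⟨-, -, hux'⟩, ⟨-, hvx'⟩, hwx'⟩ := hnd'
  simp only [Set.mem_insert_iff, Set.mem_singleton_iff, not_or] at ha
  obtain ⟨hau, hav, haw, hax, haz'⟩ := ha
  set Tset : Set V := {u, v, w, x} with hTset
  set S : Finset (V × V) := D.outBoundary Tset with hSdef
  have memS : ∀ p : V × V, p ∈ S ↔ p.1 ∈ Tset ∧ p.2 ∉ Tset ∧ D.Adj p.1 p.2 := by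
    intro p
    simp [hSdef, Digr.outBoundary, Set.Finite.mem_toFinset]
  -- adjacency in delArcs for arcs inside Tset
  have hDA : ∀ b c : V, D.Adj b c → c ∈ Tset → (D.delArcs ↑S).Adj b c := by
    intro b c hbc hc
    refine ⟨hbc, ?_⟩
    intro hmem
    rw [Finset.mem_coe, memS] at hmem
    exact hmem.2.1 hc
  have hu : u ∈ Tset := by simp [hTset]
  have hv : v ∈ Tset := by simp [hTset]
  have hw : w ∈ Tset := by simp [hTset]
  have hxT : x ∈ Tset := by simp [hTset]
  have auv := hDA u v huv hv
  have avw := hDA v w hvw hw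
  have awx := hDA w x hwx hxT
  have axu := hDA x u hxu hu
  -- reachability facts in delArcs
  have ruv : (D.delArcs ↑S).Reach u v := Relation.ReflTransGen.single auv
  have ruw : (D.delArcs ↑S).Reach u w := ruv.tail avw
  have rux : (D.delArcs ↑S).Reach u x := ruw.tail awx
  have rvu : (D.delArcs ↑S).Reach v u :=
    ((Relation.ReflTransGen.single avw).tail awx).tail axu
  have rwu : (D.delArcs ↑S).Reach w u :=
    (Relation.ReflTransGen.single awx).tail axu
  have rxu : (D.delArcs ↑S).Reach x u := Relation.ReflTransGen.single axu
  set X : Set V := {y | (D.delArcs ↑S).MReach u y} with hXdef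
  have huX : u ∈ X := ⟨Relation.ReflTransGen.refl, Relation.ReflTransGen.refl⟩
  have hvX : v ∈ X := ⟨ruv, rvu⟩
  -- X ⊆ Tset
  have hXsub : X ⊆ Tset := by
    have hreach : ∀ y, (D.delArcs ↑S).Reach u y → y ∈ Tset := by
      intro y hr
      induction hr with
      | refl => exact hu
      | tail hbc hcd ih =>
        by_contra hc
        exact hcd.2 (by rw [Finset.mem_coe, memS]; exact ⟨ih, hc, hcd.1⟩)
    exact fun y hy => hreach y hy.1
  have hzT : z ∉ Tset := by
    simp only [hTset, Set.mem_insert_iff, Set.mem_singleton_iff, not_or]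
    exact ⟨fun h => huz' h.symm, fun h => hvz' h.symm, fun h => hwz' h.symm,
      fun h => hxz h.symm⟩
  have haT : a ∉ Tset := by
    simp only [hTset, Set.mem_insert_iff, Set.mem_singleton_iff, not_or]
    exact ⟨hau, hav, haw, hax⟩
  have hzX : z ∉ X := fun h => hzT (hXsub h)
  have haX : a ∉ X := fun h => haT (hXsub h)
  -- the restricted arc-cut
  have hcut : D.IsRestrictedArcCut ↑S := by
    refine ⟨fun p hp => ((memS p).1 hp).2.2, X, ⟨u, rfl⟩, ⟨u, huX, v, hvX, auv⟩, ?_⟩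
    rcases haz with h | h
    · exact ⟨z, a, h, hzX, haX⟩
    · exact ⟨a, z, h, haX, hzX⟩
  -- cardinality bound
  set Tf : Finset V := {u, v, w, x} with hTf
  have hTfmem : ∀ y, y ∈ Tf ↔ y ∈ Tset := by
    intro y; simp [hTf, hTset]
  set A : Finset (V × V) :=
    Tf.biUnion (fun y => (Finset.univ.filter (D.Adj y)).image (Prod.mk y)) with hAdef
  have memA : ∀ p : V × V, p ∈ A ↔ p.1 ∈ Tset ∧ D.Adj p.1 p.2 := by
    intro ⟨b, c⟩
    simp only [hAdef, Finset.mem_biUnion, Finset.mem_image, Finset.mem_filter,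
      Finset.mem_univ, true_and, hTfmem]
    constructor
    · rintro ⟨y, hy, c', hc', heq⟩
      obtain ⟨rfl, rfl⟩ := Prod.mk.injEq .. ▸ heq
      exact ⟨hy, hc'⟩
    · rintro ⟨hb, hbc⟩
      exact ⟨b, hb, c, hbc, rfl⟩
  have hAcard : A.card = D.outDeg u + D.outDeg v + D.outDeg w + D.outDeg x := by
    rw [hAdef, Finset.card_biUnion]
    · have h1 : ∀ y : V,
          ((Finset.univ.filter (D.Adj y)).image (Prod.mk y)).card = D.outDeg y := by
        intro y
        rw [Finset.card_image_of_injective _ (fun c c' h => by simpa using h)]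
        rfl
      rw [hTf]
      rw [Finset.sum_insert (by simp [huv', huw', hux']),
        Finset.sum_insert (by simp [hvw', hvx']),
        Finset.sum_insert (by simp [hwx']), Finset.sum_singleton]
      rw [h1, h1, h1, h1]
      ring
    · intro y _ y' _ hyy'
      simp only [Finset.disjoint_left]
      rintro ⟨b, c⟩ hb hb'
      simp only [Finset.mem_image] at hb hb'
      obtain ⟨c1, -, heq1⟩ := hb
      obtain ⟨c2, -, heq2⟩ := hb'
      obtain ⟨rfl, -⟩ := Prod.mk.injEq .. ▸ heq1
      obtain ⟨rfl, -⟩ := Prod.mk.injEq .. ▸ heq2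
      exact hyy' rfl
  set C : Finset (V × V) := {(u, v), (v, w), (w, x), (x, u)} with hCdef
  have hCcard : C.card = 4 := by
    rw [hCdef]
    rw [Finset.card_insert_of_notMem (by
        simp only [Finset.mem_insert, Finset.mem_singleton, Prod.mk.injEq, not_or]
        exact ⟨fun h => huv' h.1, fun h => huw' h.1, fun h => hux' h.1⟩),
      Finset.card_insert_of_notMem (by
        simp only [Finset.mem_insert, Finset.mem_singleton, Prod.mk.injEq, not_or]
        exact ⟨fun h => hvw' h.1, fun h => hvx' h.1⟩),
      Finset.card_insert_of_notMem (by
        simp only [Finset.mem_singleton, Prod.mk.injEq]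
        exact fun h => hwx' h.1),
      Finset.card_singleton]
  have hCsubA : C ⊆ A := by
    intro p hp
    rw [memA]
    rw [hCdef] at hp
    simp only [Finset.mem_insert, Finset.mem_singleton] at hp
    rcases hp with rfl | rfl | rfl | rfl
    · exact ⟨hu, huv⟩
    · exact ⟨hv, hvw⟩
    · exact ⟨hw, hwx⟩
    · exact ⟨hxT, hxu⟩
  have hSsubAC : S ⊆ A \ C := by
    intro p hp
    rw [memS] at hp
    rw [Finset.mem_sdiff, memA]
    refine ⟨⟨hp.1, hp.2.2⟩, ?_⟩
    intro hpC
    rw [hCdef] at hpC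
    simp only [Finset.mem_insert, Finset.mem_singleton] at hpC
    rcases hpC with rfl | rfl | rfl | rfl
    · exact hp.2.1 hv
    · exact hp.2.1 hw
    · exact hp.2.1 hxT
    · exact hp.2.1 hu
  have hScard : S.card + 4 ≤ D.outDeg u + D.outDeg v + D.outDeg w + D.outDeg x := by
    have h1 : S.card ≤ (A \ C).card := Finset.card_le_card hSsubAC
    have h2 : (A \ C).card = A.card - C.card := Finset.card_sdiff_of_subset hCsubA
    have h3 : C.card ≤ A.card := Finset.card_le_card hCsubA
    omega
  -- out-degree of z is at least 1
  have hz1 : 1 ≤ D.outDeg z := by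
    have : u ∈ Finset.univ.filter (D.Adj z) := by simp [hzu]
    exact Finset.card_pos.mpr ⟨u, this⟩
  have hlam : D.lambdaPrime ≤ S.card :=
    Nat.sInf_le ⟨S, hcut, rfl⟩
  refine ⟨⟨↑S, hcut⟩, ?_⟩
  omega
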